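/- Let R > 0 and y ∈ ℝ³ with 0 < ‖y‖ < R, set ȳ = (R²/‖y‖²) y, and define the regular part H(x, y) = −(‖x‖² + ‖y‖²)/(8πR³) − R/(4π‖y‖·‖x − ȳ‖) − (1/(4πR)) log(2R²/(R² − ⟨x, y⟩ + ‖y‖·‖x − ȳ‖)). Then H(·, y) is smooth on the open ball {x : ‖x‖ < R} and satisfies Δ_x H(x, y) = −3/(4πR³) for every x with ‖x‖ < R. -/

import Mathlib

open Real
open scoped RealInnerProductSpace

/-- The Euclidean Laplacian in `ℝ³`: the sum of the pure second partial derivatives. -/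
noncomputable def laplacian (f : EuclideanSpace ℝ (Fin 3) → ℝ)
    (x : EuclideanSpace ℝ (Fin 3)) : ℝ :=
  ∑ i : Fin 3,
    fderiv ℝ (fun z => fderiv ℝ f z (EuclideanSpace.single i (1 : ℝ))) x
      (EuclideanSpace.single i (1 : ℝ))

/-- The regular part of the Neumann function of the ball `B_R ⊆ ℝ³`:
`H(x, y) = −(‖x‖² + ‖y‖²)/(8πR³) − R/(4π‖y‖‖x − ȳ‖)
  − (1/(4πR)) log(2R²/(R² − ⟨x,y⟩ + ‖y‖‖x − ȳ‖))`, where `ȳ = (R²/‖y‖²) y`. -/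
noncomputable def Hreg (R : ℝ) (x y : EuclideanSpace ℝ (Fin 3)) : ℝ :=
  -((‖x‖ ^ 2 + ‖y‖ ^ 2) / (8 * π * R ^ 3))
    - R / (4 * π * ‖y‖ * ‖x - (R ^ 2 / ‖y‖ ^ 2) • y‖)
    - (1 / (4 * π * R)) *
        Real.log (2 * R ^ 2 / (R ^ 2 - ⟪x, y⟫ + ‖y‖ * ‖x - (R ^ 2 / ‖y‖ ^ 2) • y‖))

section Aux

local notation "E3" => EuclideanSpace ℝ (Fin 3)

private lemma hasFDerivAt_norm_sub (a x : E3) (h : x - a ≠ 0) :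
    HasFDerivAt (fun z : E3 => ‖z - a‖) (innerSL ℝ ((‖x - a‖)⁻¹ • (x - a))) x := by
  have h1 : HasFDerivAt (fun z : E3 => z - a) (ContinuousLinearMap.id ℝ E3) x :=
    (hasFDerivAt_id x).sub_const a
  have h2 : HasFDerivAt (fun z : E3 => ‖z - a‖^2)
      (2 • (innerSL ℝ (x - a)).comp (ContinuousLinearMap.id ℝ E3)) x := h1.norm_sq
  have hne : ‖x - a‖^2 ≠ 0 := pow_ne_zero 2 (norm_ne_zero_iff.2 h)
  have h3 : HasDerivAt Real.sqrt (1 / (2 * Real.sqrt (‖x - a‖^2))) (‖x - a‖^2) :=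
    Real.hasDerivAt_sqrt hne
  have h4 := h3.comp_hasFDerivAt x h2
  have h5 : (Real.sqrt ∘ fun z : E3 => ‖z - a‖^2) = fun z : E3 => ‖z - a‖ := by
    funext z; exact Real.sqrt_sq (norm_nonneg _)
  rw [h5] at h4
  refine h4.congr_fderiv ?_
  symm
  ext v
  have hn : Real.sqrt (‖x - a‖^2) = ‖x - a‖ := Real.sqrt_sq (norm_nonneg _)
  have hne' : ‖x - a‖ ≠ 0 := norm_ne_zero_iff.2 h
  simp [hn, real_inner_smul_left, two_smul]
  field_simp
  ring

private lemma hasFDerivAt_uf (R : ℝ) (y a x : E3) (h : x - a ≠ 0) :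
    HasFDerivAt (fun z : E3 => R^2 - ⟪z, y⟫ + ‖y‖ * ‖z - a‖)
      (innerSL ℝ (-y + (‖y‖ * (‖x - a‖)⁻¹) • (x - a))) x := by
  have hi : HasFDerivAt (fun z : E3 => ⟪z, y⟫) (innerSL ℝ y) x := by
    have : (fun z : E3 => ⟪z, y⟫) = fun z => innerSL ℝ y z := by
      funext z; simp only [innerSL_apply_apply]; exact real_inner_comm y z
    rw [this]; exact (innerSL ℝ y).hasFDerivAt
  have hn := hasFDerivAt_norm_sub a x h
  have := ((hasFDerivAt_const (R^2) x).sub hi).add (hn.const_mul ‖y‖)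
  refine this.congr_fderiv ?_
  symm
  ext v
  simp [real_inner_smul_left, inner_add_left]
  ring

private lemma hasFDerivAt_main (R c₁ c₂ c₃ : ℝ) (y a x : E3) (h : x - a ≠ 0)
    (hu : R^2 - ⟪x, y⟫ + ‖y‖ * ‖x - a‖ ≠ 0) :
    HasFDerivAt (fun z : E3 => c₁*‖z‖^2 + c₂*(‖z - a‖)⁻¹
        + c₃*Real.log (R^2 - ⟪z, y⟫ + ‖y‖ * ‖z - a‖))
      (innerSL ℝ ((2*c₁) • x
        + (-c₂*((‖x - a‖)^3)⁻¹ + c₃*‖y‖*((R^2 - ⟪x, y⟫ + ‖y‖*‖x - a‖) * ‖x - a‖)⁻¹) • (x - a)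
        + (-c₃*(R^2 - ⟪x, y⟫ + ‖y‖*‖x - a‖)⁻¹) • y)) x := by
  have hn : ‖x - a‖ ≠ 0 := norm_ne_zero_iff.2 h
  have t1 := ((hasStrictFDerivAt_norm_sq x).hasFDerivAt).const_mul c₁
  have t2 := (((hasDerivAt_inv hn).comp_hasFDerivAt x (hasFDerivAt_norm_sub a x h)).const_mul c₂)
  have t3 := ((hasFDerivAt_uf R y a x h).log hu).const_mul c₃
  have := (t1.add t2).add t3
  refine this.congr_fderiv ?_
  symm
  ext v
  simp only [ContinuousLinearMap.add_apply, ContinuousLinearMap.coe_smul', Pi.smul_apply,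
    innerSL_apply_apply, inner_add_left, real_inner_smul_left, inner_neg_left, smul_eq_mul, two_smul,
    ContinuousLinearMap.smul_apply]
  set n := ‖x - a‖ with hndef
  set p : ℝ := ⟪x, y⟫ with hpdef
  set A : ℝ := ⟪x, v⟫ with hAdef
  set B : ℝ := ⟪x - a, v⟫ with hBdef
  set C : ℝ := ⟪y, v⟫ with hCdef
  have hu1 : R^2 - p + ‖y‖ * n ≠ 0 := hu
  have hu2 : n * ‖y‖ + (R^2 - p) ≠ 0 := by
    intro hc; apply hu1; linarith [hc]
  field_simp [hu1, hu2]
  ring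

private lemma hasFDerivAt_beta (R c₂ c₃ : ℝ) (y a x : E3) (h : x - a ≠ 0)
    (hu : R^2 - ⟪x, y⟫ + ‖y‖ * ‖x - a‖ ≠ 0) :
    HasFDerivAt (fun z : E3 => -c₂*((‖z - a‖)^3)⁻¹
        + c₃*‖y‖*((R^2 - ⟪z, y⟫ + ‖y‖*‖z - a‖) * ‖z - a‖)⁻¹)
      (innerSL ℝ
        ((3*c₂*((‖x - a‖)^5)⁻¹
            - c₃*‖y‖*(((R^2 - ⟪x, y⟫ + ‖y‖*‖x - a‖) * ‖x - a‖)^2)⁻¹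
                * ((R^2 - ⟪x, y⟫ + ‖y‖*‖x - a‖) * (‖x - a‖)⁻¹ + ‖y‖)) • (x - a)
          + (c₃*‖y‖*‖x - a‖*(((R^2 - ⟪x, y⟫ + ‖y‖*‖x - a‖) * ‖x - a‖)^2)⁻¹) • y)) x := by
  have hn : ‖x - a‖ ≠ 0 := norm_ne_zero_iff.2 h
  have hN := hasFDerivAt_norm_sub a x h
  have hU := hasFDerivAt_uf R y a x h
  have d1 : HasDerivAt (fun t : ℝ => (t^3)⁻¹) (-(3*‖x - a‖^2) / (‖x - a‖^3)^2) ‖x - a‖ := by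
    have h0 := (hasDerivAt_pow 3 ‖x - a‖).inv (pow_ne_zero 3 hn)
    norm_num at h0 ⊢
    exact h0
  have t1 := (d1.comp_hasFDerivAt x hN).const_mul (-c₂)
  have hprod := hU.mul hN
  have d2 : HasDerivAt (fun t : ℝ => t⁻¹)
      (-(((R^2 - ⟪x, y⟫ + ‖y‖*‖x - a‖) * ‖x - a‖)^2)⁻¹)
      ((R^2 - ⟪x, y⟫ + ‖y‖*‖x - a‖) * ‖x - a‖) :=
    hasDerivAt_inv (mul_ne_zero hu hn)
  have t2 := (d2.comp_hasFDerivAt x hprod).const_mul (c₃*‖y‖)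
  have := t1.add t2
  refine this.congr_fderiv ?_
  symm
  ext v
  simp only [ContinuousLinearMap.add_apply, ContinuousLinearMap.coe_smul', Pi.smul_apply,
    innerSL_apply_apply, inner_add_left, real_inner_smul_left, inner_neg_left, smul_eq_mul,
    ContinuousLinearMap.smul_apply, inner_sub_left]
  set n := ‖x - a‖ with hndef
  set p : ℝ := ⟪x, y⟫ with hpdef
  set B : ℝ := ⟪x - a, v⟫ with hBdef
  set C : ℝ := ⟪y, v⟫ with hCdef
  have hu1 : R^2 - p + ‖y‖ * n ≠ 0 := hu
  field_simp [hu1]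
  ring

private lemma hasFDerivAt_gamma (R c₃ : ℝ) (y a x : E3) (h : x - a ≠ 0)
    (hu : R^2 - ⟪x, y⟫ + ‖y‖ * ‖x - a‖ ≠ 0) :
    HasFDerivAt (fun z : E3 => -c₃*(R^2 - ⟪z, y⟫ + ‖y‖*‖z - a‖)⁻¹)
      (innerSL ℝ
        ((c₃*‖y‖*((R^2 - ⟪x, y⟫ + ‖y‖*‖x - a‖)^2)⁻¹*(‖x - a‖)⁻¹) • (x - a)
          + (-c₃*((R^2 - ⟪x, y⟫ + ‖y‖*‖x - a‖)^2)⁻¹) • y)) x := by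
  have hn : ‖x - a‖ ≠ 0 := norm_ne_zero_iff.2 h
  have hU := hasFDerivAt_uf R y a x h
  have d2 : HasDerivAt (fun t : ℝ => t⁻¹)
      (-((R^2 - ⟪x, y⟫ + ‖y‖*‖x - a‖)^2)⁻¹) (R^2 - ⟪x, y⟫ + ‖y‖*‖x - a‖) :=
    hasDerivAt_inv hu
  have t2 := (d2.comp_hasFDerivAt x hU).const_mul (-c₃)
  refine t2.congr_fderiv ?_
  symm
  ext v
  simp only [ContinuousLinearMap.add_apply, ContinuousLinearMap.coe_smul', Pi.smul_apply,
    innerSL_apply_apply, inner_add_left, real_inner_smul_left, inner_neg_left, smul_eq_mul,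
    ContinuousLinearMap.smul_apply]
  set n := ‖x - a‖ with hndef
  set p : ℝ := ⟪x, y⟫ with hpdef
  set B : ℝ := ⟪x - a, v⟫ with hBdef
  set C : ℝ := ⟪y, v⟫ with hCdef
  have hu1 : R^2 - p + ‖y‖ * n ≠ 0 := hu
  field_simp [hu1]
  ring

private lemma laplacian_aux (R c₁ c₂ c₃ : ℝ) (y a : E3) (f : E3 → ℝ) (S : Set E3)
    (hS : IsOpen S)
    (ha : ∀ z ∈ S, z - a ≠ 0)
    (hu : ∀ z ∈ S, R^2 - ⟪z, y⟫ + ‖y‖ * ‖z - a‖ ≠ 0)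
    (hf : ∀ z ∈ S, HasFDerivAt f
      (innerSL ℝ ((2*c₁) • z
        + (-c₂*((‖z - a‖)^3)⁻¹ + c₃*‖y‖*((R^2 - ⟪z, y⟫ + ‖y‖*‖z - a‖) * ‖z - a‖)⁻¹) • (z - a)
        + (-c₃*(R^2 - ⟪z, y⟫ + ‖y‖*‖z - a‖)⁻¹) • y)) z)
    (hay : ⟪a, y⟫ = R^2)
    (x : E3) (hx : x ∈ S) :
    laplacian f x = 6*c₁ := by
  have hxa := ha x hx
  have hux := hu x hx
  have hn : ‖x - a‖ ≠ 0 := norm_ne_zero_iff.2 hxa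
  have key : ∀ i : Fin 3,
      fderiv ℝ (fun z => fderiv ℝ f z (EuclideanSpace.single i (1:ℝ))) x
          (EuclideanSpace.single i (1:ℝ))
        = 2*c₁ + (-c₂*((‖x - a‖)^3)⁻¹ + c₃*‖y‖*((R^2 - ⟪x, y⟫ + ‖y‖*‖x - a‖) * ‖x - a‖)⁻¹)
          + (x i - a i) *
              ((3*c₂*((‖x - a‖)^5)⁻¹
                  - c₃*‖y‖*(((R^2 - ⟪x, y⟫ + ‖y‖*‖x - a‖) * ‖x - a‖)^2)⁻¹
                      * ((R^2 - ⟪x, y⟫ + ‖y‖*‖x - a‖) * (‖x - a‖)⁻¹ + ‖y‖)) * (x i - a i)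
                + (c₃*‖y‖*‖x - a‖*(((R^2 - ⟪x, y⟫ + ‖y‖*‖x - a‖) * ‖x - a‖)^2)⁻¹) * (y i))
          + (y i) *
              ((c₃*‖y‖*((R^2 - ⟪x, y⟫ + ‖y‖*‖x - a‖)^2)⁻¹*(‖x - a‖)⁻¹) * (x i - a i)
                + (-c₃*((R^2 - ⟪x, y⟫ + ‖y‖*‖x - a‖)^2)⁻¹) * (y i)) := by
    intro i
    have hev : (fun z => fderiv ℝ f z (EuclideanSpace.single i (1:ℝ)))
        =ᶠ[nhds x] (fun w : E3 => 2*c₁*(w i)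
          + (-c₂*((‖w - a‖)^3)⁻¹
              + c₃*‖y‖*((R^2 - ⟪w, y⟫ + ‖y‖*‖w - a‖) * ‖w - a‖)⁻¹)*(w i - a i)
          + (-c₃*(R^2 - ⟪w, y⟫ + ‖y‖*‖w - a‖)⁻¹)*(y i)) := by
      filter_upwards [hS.mem_nhds hx] with w hw
      rw [(hf w hw).fderiv]
      simp [PiLp.add_apply, PiLp.smul_apply, PiLp.sub_apply, smul_eq_mul, EuclideanSpace.inner_single_right]
    rw [hev.fderiv_eq]
    have hβ := hasFDerivAt_beta R c₂ c₃ y a x hxa hux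
    have hγ := hasFDerivAt_gamma R c₃ y a x hxa hux
    have hproj : HasFDerivAt (fun z : E3 => z i)
        (EuclideanSpace.proj i : E3 →L[ℝ] ℝ) x := by
      simpa using (EuclideanSpace.proj i : E3 →L[ℝ] ℝ).hasFDerivAt
    have t1 := hproj.const_mul (2*c₁)
    have t2 := hβ.mul (hproj.sub_const (a i))
    have t3 := hγ.mul_const (y i)
    have htot := (t1.add t2).add t3
    erw [htot.fderiv]
    simp [PiLp.add_apply, PiLp.smul_apply, PiLp.sub_apply, smul_eq_mul,
      EuclideanSpace.single_apply, EuclideanSpace.inner_single_right]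
    ring
  have hSxx : ∑ i : Fin 3, (x i - a i)*(x i - a i) = ‖x - a‖^2 := by
    rw [← real_inner_self_eq_norm_sq, PiLp.inner_apply]
    simp [PiLp.inner_apply, PiLp.sub_apply, sq]
  have hSxy : ∑ i : Fin 3, (x i - a i)*(y i) = ⟪x, y⟫ - R^2 := by
    have h1 : ⟪x - a, y⟫ = ∑ i : Fin 3, (x i - a i)*(y i) := by
      simp [PiLp.inner_apply, PiLp.sub_apply, mul_comm]
    rw [← h1, inner_sub_left, hay]
  have hSyy : ∑ i : Fin 3, (y i)*(y i) = ‖y‖^2 := by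
    rw [← real_inner_self_eq_norm_sq, PiLp.inner_apply]
    simp [PiLp.inner_apply, sq]
  unfold laplacian
  rw [Finset.sum_congr rfl (fun i _ => key i)]
  have expand : ∀ i : Fin 3,
      (2*c₁ + (-c₂*((‖x - a‖)^3)⁻¹ + c₃*‖y‖*((R^2 - ⟪x, y⟫ + ‖y‖*‖x - a‖) * ‖x - a‖)⁻¹)
          + (x i - a i) *
              ((3*c₂*((‖x - a‖)^5)⁻¹
                  - c₃*‖y‖*(((R^2 - ⟪x, y⟫ + ‖y‖*‖x - a‖) * ‖x - a‖)^2)⁻¹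
                      * ((R^2 - ⟪x, y⟫ + ‖y‖*‖x - a‖) * (‖x - a‖)⁻¹ + ‖y‖)) * (x i - a i)
                + (c₃*‖y‖*‖x - a‖*(((R^2 - ⟪x, y⟫ + ‖y‖*‖x - a‖) * ‖x - a‖)^2)⁻¹) * (y i))
          + (y i) *
              ((c₃*‖y‖*((R^2 - ⟪x, y⟫ + ‖y‖*‖x - a‖)^2)⁻¹*(‖x - a‖)⁻¹) * (x i - a i)
                + (-c₃*((R^2 - ⟪x, y⟫ + ‖y‖*‖x - a‖)^2)⁻¹) * (y i)))
      = (2*c₁ + (-c₂*((‖x - a‖)^3)⁻¹ + c₃*‖y‖*((R^2 - ⟪x, y⟫ + ‖y‖*‖x - a‖) * ‖x - a‖)⁻¹))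
        + (3*c₂*((‖x - a‖)^5)⁻¹
            - c₃*‖y‖*(((R^2 - ⟪x, y⟫ + ‖y‖*‖x - a‖) * ‖x - a‖)^2)⁻¹
                * ((R^2 - ⟪x, y⟫ + ‖y‖*‖x - a‖) * (‖x - a‖)⁻¹ + ‖y‖)) * ((x i - a i)*(x i - a i))
        + ((c₃*‖y‖*‖x - a‖*(((R^2 - ⟪x, y⟫ + ‖y‖*‖x - a‖) * ‖x - a‖)^2)⁻¹)
            + (c₃*‖y‖*((R^2 - ⟪x, y⟫ + ‖y‖*‖x - a‖)^2)⁻¹*(‖x - a‖)⁻¹)) * ((x i - a i)*(y i))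
        + (-c₃*((R^2 - ⟪x, y⟫ + ‖y‖*‖x - a‖)^2)⁻¹) * ((y i)*(y i)) := by
    intro i; ring
  rw [Finset.sum_congr rfl (fun i _ => expand i)]
  rw [Finset.sum_add_distrib, Finset.sum_add_distrib, Finset.sum_add_distrib,
    ← Finset.mul_sum, ← Finset.mul_sum, ← Finset.mul_sum, hSxx, hSxy, hSyy, Finset.sum_const]
  simp only [Finset.card_univ, Fintype.card_fin, nsmul_eq_mul, Nat.cast_ofNat]
  set n := ‖x - a‖ with hndef
  set p : ℝ := ⟪x, y⟫ with hpdef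
  have hu1 : R^2 - p + ‖y‖ * n ≠ 0 := hux
  field_simp [hu1, show R^2 - p + n * ‖y‖ ≠ 0 by rwa [mul_comm]]
  ring

end Aux

/-- For `0 < ‖y‖ < R`, the regular part `H(·, y)` of the Neumann function of the ball is
smooth on the open ball `{‖x‖ < R}` and satisfies `Δ_x H(x, y) = −3/(4πR³)` there. -/
theorem regular_part_laplacian (R : ℝ) (hR : 0 < R)
    (y : EuclideanSpace ℝ (Fin 3)) (hy0 : 0 < ‖y‖) (hyR : ‖y‖ < R) :
    ContDiffOn ℝ (⊤ : ℕ∞) (fun x => Hreg R x y)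
        {x : EuclideanSpace ℝ (Fin 3) | ‖x‖ < R} ∧
    ∀ x : EuclideanSpace ℝ (Fin 3), ‖x‖ < R →
      laplacian (fun x => Hreg R x y) x = -3 / (4 * π * R ^ 3) := by
  have hπ := Real.pi_pos
  set a : EuclideanSpace ℝ (Fin 3) := (R ^ 2 / ‖y‖ ^ 2) • y with hadef
  -- basic geometric facts
  have hna : ‖a‖ = R^2 / ‖y‖ := by
    rw [hadef, norm_smul, Real.norm_eq_abs, abs_of_pos (by positivity)]
    field_simp
  have hza : ∀ z : EuclideanSpace ℝ (Fin 3), ‖z‖ < R → z - a ≠ 0 := by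
    intro z hz hc
    have : z = a := sub_eq_zero.1 hc
    rw [this] at hz
    rw [hna] at hz
    have : R^2 < R * ‖y‖ := (div_lt_iff₀ hy0).1 hz
    nlinarith
  have huz : ∀ z : EuclideanSpace ℝ (Fin 3), ‖z‖ < R →
      0 < R^2 - ⟪z, y⟫ + ‖y‖ * ‖z - a‖ := by
    intro z hz
    have hip : ⟪z, y⟫ ≤ ‖z‖ * ‖y‖ := real_inner_le_norm z y
    have hlb : ‖a‖ - ‖z‖ ≤ ‖z - a‖ := by
      have := norm_sub_norm_le a z
      rw [norm_sub_rev] at this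
      linarith
    rw [hna] at hlb
    have hmul : ‖y‖ * (R^2/‖y‖ - ‖z‖) ≤ ‖y‖ * ‖z - a‖ :=
      mul_le_mul_of_nonneg_left hlb (le_of_lt hy0)
    have hexp : ‖y‖ * (R^2/‖y‖ - ‖z‖) = R^2 - ‖y‖*‖z‖ := by
      field_simp
    nlinarith
  have hay : ⟪a, y⟫ = R^2 := by
    rw [hadef, real_inner_smul_left, real_inner_self_eq_norm_sq]
    field_simp
  set S : Set (EuclideanSpace ℝ (Fin 3)) := {x | ‖x‖ < R} with hSdef
  have hS : IsOpen S := by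
    have : S = Metric.ball (0 : EuclideanSpace ℝ (Fin 3)) R := by
      ext z; simp [hSdef, Metric.mem_ball, dist_zero_right]
    rw [this]; exact Metric.isOpen_ball
  -- constants
  set c₀ : ℝ := -(‖y‖^2/(8*π*R^3)) - (1/(4*π*R))*Real.log (2*R^2) with hc0
  set c₁ : ℝ := -(1/(8*π*R^3)) with hc1
  set c₂ : ℝ := -(R/(4*π*‖y‖)) with hc2
  set c₃ : ℝ := 1/(4*π*R) with hc3
  have hreg_eq : ∀ z ∈ S, Hreg R z y
      = c₀ + (c₁*‖z‖^2 + c₂*(‖z - a‖)⁻¹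
          + c₃*Real.log (R^2 - ⟪z, y⟫ + ‖y‖ * ‖z - a‖)) := by
    intro z hz
    have hz' : ‖z‖ < R := hz
    have hu := huz z hz'
    have hn : ‖z - a‖ ≠ 0 := norm_ne_zero_iff.2 (hza z hz')
    rw [Hreg, ← hadef, Real.log_div (by positivity) (ne_of_gt hu)]
    rw [hc0, hc1, hc2, hc3]
    have hnpos : 0 < ‖z - a‖ := norm_pos_iff.2 (hza z hz')
    field_simp
    ring
  -- derivative of Hreg on S
  have hf : ∀ z ∈ S, HasFDerivAt (fun x => Hreg R x y)
      (innerSL ℝ ((2*c₁) • z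
        + (-c₂*((‖z - a‖)^3)⁻¹ + c₃*‖y‖*((R^2 - ⟪z, y⟫ + ‖y‖*‖z - a‖) * ‖z - a‖)⁻¹) • (z - a)
        + (-c₃*(R^2 - ⟪z, y⟫ + ‖y‖*‖z - a‖)⁻¹) • y)) z := by
    intro z hz
    have hz' : ‖z‖ < R := hz
    have hmain := hasFDerivAt_main R c₁ c₂ c₃ y a z (hza z hz') (ne_of_gt (huz z hz'))
    have h' := (hasFDerivAt_const c₀ z).add hmain
    rw [zero_add] at h'
    apply h'.congr_of_eventuallyEq
    filter_upwards [hS.mem_nhds hz] with w hw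
    exact hreg_eq w hw
  constructor
  · -- smoothness
    intro x hx
    have hx' : ‖x‖ < R := hx
    have hxa : x - a ≠ 0 := hza x hx'
    have hu := huz x hx'
    apply ContDiffWithinAt.congr' (f := fun z => c₀ + (c₁*‖z‖^2 + c₂*(‖z - a‖)⁻¹
          + c₃*Real.log (R^2 - ⟪z, y⟫ + ‖y‖ * ‖z - a‖)))
    · apply ContDiffAt.contDiffWithinAt
      have hnorm : ContDiffAt ℝ (⊤:ℕ∞) (fun z : EuclideanSpace ℝ (Fin 3) => ‖z - a‖) x := by
        apply ContDiffAt.norm ℝ (contDiffAt_id.sub contDiffAt_const)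
        simpa using hxa
      have hinner : ContDiffAt ℝ (⊤:ℕ∞) (fun z : EuclideanSpace ℝ (Fin 3) => ⟪z, y⟫) x :=
        contDiffAt_id.inner ℝ contDiffAt_const
      have hucd : ContDiffAt ℝ (⊤:ℕ∞)
          (fun z : EuclideanSpace ℝ (Fin 3) => R^2 - ⟪z, y⟫ + ‖y‖ * ‖z - a‖) x :=
        (contDiffAt_const.sub hinner).add (contDiffAt_const.mul hnorm)
      have hlog : ContDiffAt ℝ (⊤:ℕ∞)
          (fun z : EuclideanSpace ℝ (Fin 3) =>
            Real.log (R^2 - ⟪z, y⟫ + ‖y‖ * ‖z - a‖)) x :=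
        hucd.log (ne_of_gt hu)
      have hinv : ContDiffAt ℝ (⊤:ℕ∞)
          (fun z : EuclideanSpace ℝ (Fin 3) => (‖z - a‖)⁻¹) x :=
        hnorm.inv (norm_ne_zero_iff.2 hxa)
      exact contDiffAt_const.add
        (((((contDiff_norm_sq ℝ).contDiffAt).const_smul c₁).add
            (hinv.const_smul c₂)).add (hlog.const_smul c₃))
    · intro w hw
      exact hreg_eq w hw
    · exact subset_rfl
    · exact hx
  · -- Laplacian
    intro x hx
    have := laplacian_aux R c₁ c₂ c₃ y a (fun x => Hreg R x y) S hS
      (fun z hz => hza z hz) (fun z hz => ne_of_gt (huz z hz)) hf hay x hx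
    rw [this, hc1]
    field_simp
    ring
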